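/- Let G = (V, E) be a finite simple graph and P a distribution perfectly Markov to G. For 1 ≤ m ≤ k ≤ |V| − 2, define G_j = (V, E_j) by α ≁_{G_j} β iff there exists S ⊆ V \ {α, β} with |S| = j and X_α ⊥⊥ X_β | X_S. Then E_k ⊆ E_m. -/

import Mathlib

/-- `S` is a separator of `a` and `b` in `G`: it avoids `a,b` and meets every walk. -/
def SimpleGraph.IsSep {V : Type*} (G : SimpleGraph V) (a b : V) (S : Set V) : Prop :=
  a ∉ S ∧ b ∉ S ∧ ∀ p : G.Walk a b, ∃ v ∈ S, v ∈ p.support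

/-- `S` is a minimal separator of `a` and `b` in `G`. -/
def SimpleGraph.IsMinSep {V : Type*} (G : SimpleGraph V) (a b : V) (S : Set V) : Prop :=
  G.IsSep a b S ∧ ∀ T ⊂ S, ¬ G.IsSep a b T

/-- minimum cardinality of a minimal separator of `a` and `b`. -/
noncomputable def SimpleGraph.pairSepOrder {V : Type*} (G : SimpleGraph V) (a b : V) : ℕ :=
  sInf {n | ∃ S : Set V, G.IsMinSep a b S ∧ S.ncard = n}

/-- separability order: max over non-adjacent pairs of the minimum size of a minimal separator. -/
noncomputable def SimpleGraph.sepOrder {V : Type*} (G : SimpleGraph V) : ℕ :=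
  sSup {n | ∃ a b : V, a ≠ b ∧ ¬ G.Adj a b ∧ n = G.pairSepOrder a b}

/-- maximum degree (via `Set.ncard` of neighborhoods). -/
noncomputable def SimpleGraph.maxDeg {V : Type*} (G : SimpleGraph V) : ℕ :=
  sSup {n | ∃ v : V, n = (G.neighborSet v).ncard}

/-- degree two of a vertex: number of neighbors having degree at least 2. -/
noncomputable def SimpleGraph.deg2 {V : Type*} (G : SimpleGraph V) (a : V) : ℕ :=
  {γ : V | G.Adj a γ ∧ 2 ≤ (G.neighborSet γ).ncard}.ncard

/-- degree two of a graph. -/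
noncomputable def SimpleGraph.maxDeg2 {V : Type*} (G : SimpleGraph V) : ℕ :=
  sSup {n | ∃ v : V, n = G.deg2 v}

/-- `S` separates the sets `A` and `B` in `G`: every walk from `A` to `B` meets `S`. -/
def SimpleGraph.SetSep {V : Type*} (G : SimpleGraph V) (A B S : Set V) : Prop :=
  ∀ a ∈ A, ∀ b ∈ B, ∀ p : G.Walk a b, ∃ v ∈ S, v ∈ p.support

/-- The conditional-independence relation `CI` is perfectly Markov w.r.t. `G`:
for disjoint `A`, `B` nonempty and `S` nonempty, separation is equivalent to
conditional independence. -/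
def PerfectMarkov {V : Type*} (G : SimpleGraph V) (CI : Set V → Set V → Set V → Prop) : Prop :=
  ∀ A B S : Set V, A.Nonempty → B.Nonempty → S.Nonempty →
    Disjoint A B → Disjoint A S → Disjoint B S →
    (G.SetSep A B S ↔ CI A B S)

/-- the `k`-graph `G_k`: `a ≁ b` iff `X_a ⟂⟂ X_b | X_S` for some `S ⊆ V \ {a,b}` with `|S| = k`. -/
def kGraph {V : Type*} (CI : Set V → Set V → Set V → Prop) (k : ℕ) : SimpleGraph V where
  Adj a b := a ≠ b ∧
    ¬ ∃ S : Set V, a ∉ S ∧ b ∉ S ∧ S.ncard = k ∧ (CI {a} {b} S ∨ CI {b} {a} S)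
  symm := ⟨fun a b => fun ⟨hne, h⟩ =>
    ⟨hne.symm, fun ⟨S, hb, ha, hc, hci⟩ => h ⟨S, ha, hb, hc, hci.symm⟩⟩⟩
  loopless := ⟨fun a => fun ⟨hne, _⟩ => hne rfl⟩

/-- the `k`-partial graph `G_k^p`: `a ≁ b` iff `X_a ⟂⟂ X_b | X_S` for some `S ⊆ V \ {a,b}`
with `|S| ≤ k`. -/
def kpGraph {V : Type*} (CI : Set V → Set V → Set V → Prop) (k : ℕ) : SimpleGraph V where
  Adj a b := a ≠ b ∧
    ¬ ∃ S : Set V, a ∉ S ∧ b ∉ S ∧ S.ncard ≤ k ∧ (CI {a} {b} S ∨ CI {b} {a} S)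
  symm := ⟨fun a b => fun ⟨hne, h⟩ =>
    ⟨hne.symm, fun ⟨S, hb, ha, hc, hci⟩ => h ⟨S, ha, hb, hc, hci.symm⟩⟩⟩
  loopless := ⟨fun a => fun ⟨hne, _⟩ => hne rfl⟩

/-- If `P` is perfectly Markov to `G` and `1 ≤ m ≤ k ≤ |V| − 2`, then `E_k ⊆ E_m`. -/
theorem stmt12 {V : Type*} [Fintype V] (G : SimpleGraph V)
    (CI : Set V → Set V → Set V → Prop) (hpm : PerfectMarkov G CI)
    (m k : ℕ) (h1 : 1 ≤ m) (h2 : m ≤ k) (h3 : k ≤ Fintype.card V - 2) :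
    kGraph CI k ≤ kGraph CI m := by
  intro a b hab
  obtain ⟨hne, hk⟩ := hab
  refine ⟨hne, fun ⟨S, haS, hbS, hSm, hci⟩ => hk ?_⟩
  have hSne : S.Nonempty := by
    rw [Set.nonempty_iff_ne_empty]
    rintro rfl
    simp [Set.ncard_empty] at hSm
    omega
  have hdab : Disjoint ({a} : Set V) {b} := by
    simp [Set.disjoint_singleton_left, hne]
  have hdaS : Disjoint ({a} : Set V) S := Set.disjoint_singleton_left.mpr haS
  have hdbS : Disjoint ({b} : Set V) S := Set.disjoint_singleton_left.mpr hbS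
  have hsep : G.SetSep {a} {b} S := by
    cases hci with
    | inl h =>
      exact (hpm {a} {b} S ⟨a, rfl⟩ ⟨b, rfl⟩ hSne hdab hdaS hdbS).mpr h
    | inr h =>
      have hsep' : G.SetSep {b} {a} S :=
        (hpm {b} {a} S ⟨b, rfl⟩ ⟨a, rfl⟩ hSne hdab.symm hdbS hdaS).mpr h
      intro x hx y hy p
      obtain ⟨v, hvS, hvp⟩ := hsep' y hy x hx p.reverse
      exact ⟨v, hvS, by simpa using hvp⟩
  -- extend S to a set of size k inside ({a,b})ᶜ
  have hST : S ⊆ ({a, b} : Set V)ᶜ := by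
    intro x hx
    simp only [Set.mem_compl_iff, Set.mem_insert_iff, Set.mem_singleton_iff]
    rintro (rfl | rfl)
    exacts [haS hx, hbS hx]
  have hcard : (({a, b} : Set V)ᶜ).ncard = Fintype.card V - 2 := by
    have h := Set.ncard_add_ncard_compl ({a, b} : Set V)
    rw [Set.ncard_pair hne] at h
    rw [Nat.card_eq_fintype_card] at h
    omega
  obtain ⟨S', hSS', hS'T, hS'k⟩ :=
    Set.exists_superset_subset_encard_eq (k := (k : ℕ∞)) hST
      (by rw [← (Set.toFinite S).cast_ncard_eq, hSm]; exact_mod_cast h2)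
      (by rw [← (Set.toFinite _).cast_ncard_eq, hcard]; exact_mod_cast h3)
  have hS'k : S'.ncard = k := by
    have hfin : S'.Finite := Set.toFinite S'
    rw [← hfin.cast_ncard_eq] at hS'k
    exact_mod_cast hS'k
  have haS' : a ∉ S' := fun h => by simpa using hS'T h
  have hbS' : b ∉ S' := fun h => by simpa using hS'T h
  have hsep' : G.SetSep {a} {b} S' := by
    intro x hx y hy p
    obtain ⟨v, hvS, hvp⟩ := hsep x hx y hy p
    exact ⟨v, hSS' hvS, hvp⟩
  have hS'ne : S'.Nonempty := hSne.mono hSS'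
  refine ⟨S', haS', hbS', hS'k, Or.inl ?_⟩
  exact (hpm {a} {b} S' ⟨a, rfl⟩ ⟨b, rfl⟩ hS'ne hdab
    (Set.disjoint_singleton_left.mpr haS') (Set.disjoint_singleton_left.mpr hbS')).mp hsep'
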